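/- Let 0 < α < 1 and θ > -α. Define g_n(θ,α) = ∑_{i=1}^n (θ+α)_{i-1}/(θ+1)_{i-1}. Then g_n(θ,α)/n^α converges, as n → ∞, to Γ(θ+1)/(α·Γ(θ+α)). -/

import Mathlib

open Finset Real Filter

noncomputable def rf (x : ℝ) (m : ℕ) : ℝ := (ascPochhammer ℝ m).eval x

lemma rf_eq_prod (x : ℝ) (m : ℕ) : rf x m = ∏ j ∈ Finset.range m, (x + j) := by
  induction m with
  | zero => simp [rf]
  | succ n ih =>
      rw [rf, ascPochhammer_succ_eval, Finset.prod_range_succ, ← ih, rf]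

lemma rf_pos {x : ℝ} (hx : 0 < x) (m : ℕ) : 0 < rf x m := by
  rw [rf_eq_prod]
  exact Finset.prod_pos fun j _ => by positivity

/-- Stolz-type lemma. -/
lemma stolz {a b : ℕ → ℝ} {L : ℝ} (hb : ∀ i, 0 ≤ b i)
    (hdiv : Tendsto (fun n => ∑ i ∈ Finset.range n, b i) atTop atTop)
    (h : (fun i => a i - L * b i) =o[atTop] b) :
    Tendsto (fun n => (∑ i ∈ Finset.range n, a i) / (∑ i ∈ Finset.range n, b i))
      atTop (nhds L) := by
  have H := h.sum_range hb hdiv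
  have H2 : (fun n => (∑ i ∈ Finset.range n, a i) - L * ∑ i ∈ Finset.range n, b i)
      =o[atTop] (fun n => ∑ i ∈ Finset.range n, b i) := by
    refine H.congr' ?_ (by rfl)
    filter_upwards with n
    rw [Finset.sum_sub_distrib, Finset.mul_sum]
  have T := H2.tendsto_div_nhds_zero
  have hne : ∀ᶠ n in atTop, (∑ i ∈ Finset.range n, b i) ≠ 0 := by
    filter_upwards [hdiv.eventually_ge_atTop 1] with n hn
    linarith
  have T2 := T.add_const L
  rw [zero_add] at T2
  refine T2.congr' ?_
  filter_upwards [hne] with n hn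
  field_simp
  ring

lemma bern_upper {x p : ℝ} (hx : 1 ≤ x) (hp0 : 0 ≤ p) (hp1 : p ≤ 1) :
    (x + 1) ^ p ≤ x ^ p + p * x ^ (p - 1) := by
  have hx0 : (0:ℝ) < x := by linarith
  have h1 : x + 1 = x * (1 + 1/x) := by field_simp
  have h2 : (x * (1 + 1/x)) ^ p = x ^ p * (1 + 1/x) ^ p :=
    Real.mul_rpow hx0.le (by positivity)
  have h3 : (1 + 1/x) ^ p ≤ 1 + p * (1/x) := by
    refine rpow_one_add_le_one_add_mul_self ?_ hp0 hp1
    have : (0:ℝ) ≤ 1/x := by positivity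
    linarith
  have h4 : x ^ (p - 1) = x ^ p / x := by
    rw [Real.rpow_sub hx0, Real.rpow_one]
  calc (x + 1) ^ p = x ^ p * (1 + 1/x) ^ p := by rw [h1, h2]
    _ ≤ x ^ p * (1 + p * (1/x)) :=
        mul_le_mul_of_nonneg_left h3 (Real.rpow_nonneg hx0.le p)
    _ = x ^ p + p * (x ^ p / x) := by ring
    _ = x ^ p + p * x ^ (p - 1) := by rw [h4]

lemma bern_lower {x p : ℝ} (hx : 1 ≤ x) (hp0 : 0 ≤ p) (hp1 : p ≤ 1) :
    (x - 1) ^ p ≤ x ^ p - p * x ^ (p - 1) := by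
  have hx0 : (0:ℝ) < x := by linarith
  have hinv : 1/x ≤ 1 := by rw [div_le_one hx0]; exact hx
  have h1 : x - 1 = x * (1 + -(1/x)) := by field_simp; ring
  have h2 : (x * (1 + -(1/x))) ^ p = x ^ p * (1 + -(1/x)) ^ p :=
    Real.mul_rpow hx0.le (by linarith)
  have h3 : (1 + -(1/x)) ^ p ≤ 1 + p * (-(1/x)) :=
    rpow_one_add_le_one_add_mul_self (by linarith) hp0 hp1
  have h4 : x ^ (p - 1) = x ^ p / x := by
    rw [Real.rpow_sub hx0, Real.rpow_one]
  calc (x - 1) ^ p = x ^ p * (1 + -(1/x)) ^ p := by rw [h1, h2]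
    _ ≤ x ^ p * (1 + p * (-(1/x))) :=
        mul_le_mul_of_nonneg_left h3 (Real.rpow_nonneg hx0.le p)
    _ = x ^ p - p * (x ^ p / x) := by ring
    _ = x ^ p - p * x ^ (p - 1) := by rw [h4]

theorem stmt5 (α θ : ℝ) (h0 : 0 < α) (h1 : α < 1) (hθ : -α < θ) :
    Filter.Tendsto
      (fun n : ℕ => (∑ i ∈ Finset.Icc 1 n, rf (θ + α) (i - 1) / rf (θ + 1) (i - 1)) / (n : ℝ) ^ α)
      Filter.atTop (nhds (Real.Gamma (θ + 1) / (α * Real.Gamma (θ + α)))) := by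
  have hθα : 0 < θ + α := by linarith
  have hθ1 : (0:ℝ) < θ + 1 := by linarith
  set C : ℝ := Real.Gamma (θ + 1) / Real.Gamma (θ + α) with hC
  set u : ℕ → ℝ := fun j => rf (θ + α) j / rf (θ + 1) j with hu
  set b : ℕ → ℝ := fun j => ((j:ℝ) + 1) ^ (α - 1) with hbdef
  have hbpos : ∀ j, 0 < b j := fun j => Real.rpow_pos_of_pos (by positivity) _
  -- telescoping lower bound
  have htel_low : ∀ n : ℕ, ((n:ℝ) + 1) ^ α - 1 ≤ α * ∑ j ∈ Finset.range n, b j := by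
    intro n
    have key : ∀ j : ℕ, ((j:ℝ) + 1 + 1) ^ α - ((j:ℝ) + 1) ^ α ≤ α * b j := by
      intro j
      have hj1 : (1:ℝ) ≤ (j:ℝ) + 1 := by
        have : (0:ℝ) ≤ (j:ℝ) := Nat.cast_nonneg j
        linarith
      have hb := bern_upper (x := (j:ℝ) + 1) (p := α) hj1 h0.le h1.le
      simp only [hbdef]
      linarith
    calc ((n:ℝ) + 1) ^ α - 1
        = ∑ j ∈ Finset.range n, (((j:ℝ) + 1 + 1) ^ α - ((j:ℝ) + 1) ^ α) := by
          have h := Finset.sum_range_sub (f := fun j => ((j:ℝ) + 1) ^ α) n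
          push_cast at h
          rw [h]
          norm_num
      _ ≤ ∑ j ∈ Finset.range n, α * b j := Finset.sum_le_sum fun j _ => key j
      _ = α * ∑ j ∈ Finset.range n, b j := by rw [Finset.mul_sum]
  -- telescoping upper bound
  have htel_up : ∀ n : ℕ, α * ∑ j ∈ Finset.range n, b j ≤ α + ((n:ℝ) + 1) ^ α - 1 := by
    intro n
    have key : ∀ j : ℕ, α * b (j + 1) ≤ ((j:ℝ) + 1 + 1) ^ α - ((j:ℝ) + 1) ^ α := by
      intro j
      have hj1 : (1:ℝ) ≤ (j:ℝ) + 1 + 1 := by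
        have : (0:ℝ) ≤ (j:ℝ) := Nat.cast_nonneg j
        linarith
      have hb := bern_lower (x := (j:ℝ) + 1 + 1) (p := α) hj1 h0.le h1.le
      have hx : ((j:ℝ) + 1 + 1) - 1 = (j:ℝ) + 1 := by ring
      rw [hx] at hb
      have hbv : b (j + 1) = ((j:ℝ) + 1 + 1) ^ (α - 1) := by
        simp only [hbdef]
        push_cast
        ring_nf
      rw [hbv]
      linarith
    cases n with
    | zero => simp; linarith
    | succ m =>
        have hsplit : ∑ j ∈ Finset.range (m + 1), b j
            = b 0 + ∑ j ∈ Finset.range m, b (j + 1) := by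
          rw [Finset.sum_range_succ']; ring
        have hb0 : b 0 = 1 := by simp [hbdef]
        have h2 : α * ∑ j ∈ Finset.range m, b (j + 1)
            ≤ ∑ j ∈ Finset.range m, (((j:ℝ) + 1 + 1) ^ α - ((j:ℝ) + 1) ^ α) := by
          rw [Finset.mul_sum]
          exact Finset.sum_le_sum fun j _ => key j
        have h3 : ∑ j ∈ Finset.range m, (((j:ℝ) + 1 + 1) ^ α - ((j:ℝ) + 1) ^ α)
            = ((m:ℝ) + 1) ^ α - 1 := by
          have h := Finset.sum_range_sub (f := fun j => ((j:ℝ) + 1) ^ α) m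
          push_cast at h
          rw [h]
          norm_num
        have hmono : ((m:ℝ) + 1) ^ α ≤ ((m:ℝ) + 1 + 1) ^ α :=
          Real.rpow_le_rpow (by positivity) (by linarith) h0.le
        have hcast : ((m + 1 : ℕ) : ℝ) + 1 = (m:ℝ) + 1 + 1 := by push_cast; ring
        rw [hsplit, hb0, hcast, mul_add, mul_one]
        linarith
  -- sum of b tends to infinity
  have hTtop : Tendsto (fun n => ∑ j ∈ Finset.range n, b j) atTop atTop := by
    have hInf : Tendsto (fun n : ℕ => (((n:ℝ) + 1) ^ α - 1) / α) atTop atTop := by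
      have g1 : Tendsto (fun n : ℕ => ((n:ℝ) + 1) ^ α) atTop atTop :=
        (tendsto_rpow_atTop h0).comp
          (tendsto_atTop_add_const_right _ 1 tendsto_natCast_atTop_atTop)
      have g2 := tendsto_atTop_add_const_right atTop (-1 : ℝ) g1
      have g3 := g2.atTop_div_const h0
      exact Tendsto.congr (fun n => by ring) g3
    refine tendsto_atTop_mono (fun n => ?_) hInf
    rw [div_le_iff₀ h0]
    have := htel_low n
    linarith
  -- term asymptotics
  have hΓα : (0:ℝ) < Real.Gamma (θ + α) := Real.Gamma_pos_of_pos hθα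
  have hterm : Tendsto (fun j => u j / b j) atTop (nhds C) := by
    have hR : Tendsto (fun n => Real.GammaSeq (θ + 1) n / Real.GammaSeq (θ + α) n)
        atTop (nhds C) :=
      (Real.GammaSeq_tendsto_Gamma (θ + 1)).div (Real.GammaSeq_tendsto_Gamma (θ + α)) hΓα.ne'
    have hq : Tendsto (fun n : ℕ => ((n:ℝ) / ((n:ℝ) + 2)) ^ (α - 1)) atTop (nhds 1) := by
      have hbase : Tendsto (fun n : ℕ => (n:ℝ) / ((n:ℝ) + 2)) atTop (nhds 1) := by
        have := Filter.Tendsto.comp (tendsto_natCast_div_add_atTop (𝕜 := ℝ) 2)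
            (tendsto_id (α := ℕ))
        simpa using this
      have := hbase.rpow_const (p := α - 1) (Or.inl one_ne_zero)
      simpa using this
    have hmul : Tendsto (fun n : ℕ =>
        Real.GammaSeq (θ + 1) n / Real.GammaSeq (θ + α) n * ((n:ℝ) / ((n:ℝ) + 2)) ^ (α - 1))
        atTop (nhds C) := by
      have := hR.mul hq
      simpa using this
    have hshift : Tendsto (fun n : ℕ => u (n + 1) / b (n + 1)) atTop (nhds C) := by
      refine hmul.congr' ?_
      filter_upwards [eventually_ge_atTop 1] with n hn
      have hN0 : (0:ℝ) < (n:ℝ) := by exact_mod_cast hn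
      have hfac : (0:ℝ) < (n.factorial : ℝ) := by exact_mod_cast Nat.factorial_pos n
      have hA : 0 < rf (θ + α) (n + 1) := rf_pos hθα _
      have hB : 0 < rf (θ + 1) (n + 1) := rf_pos hθ1 _
      have e1 : Real.GammaSeq (θ + 1) n = (n:ℝ) ^ (θ + 1) * (n.factorial : ℝ) / rf (θ + 1) (n + 1) := by
        rw [Real.GammaSeq, rf_eq_prod]
      have e2 : Real.GammaSeq (θ + α) n = (n:ℝ) ^ (θ + α) * (n.factorial : ℝ) / rf (θ + α) (n + 1) := by
        rw [Real.GammaSeq, rf_eq_prod]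
      have e3 : ((n:ℝ) / ((n:ℝ) + 2)) ^ (α - 1) = (n:ℝ) ^ (α - 1) / ((n:ℝ) + 2) ^ (α - 1) :=
        Real.div_rpow hN0.le (by positivity) _
      have e4 : b (n + 1) = ((n:ℝ) + 2) ^ (α - 1) := by
        simp only [hbdef]; push_cast; ring_nf
      have hpow : (n:ℝ) ^ (θ + 1) * (n:ℝ) ^ (α - 1) = (n:ℝ) ^ (θ + α) := by
        rw [← Real.rpow_add hN0]; ring_nf
      have hP1 : (0:ℝ) < (n:ℝ) ^ (θ + 1) := Real.rpow_pos_of_pos hN0 _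
      have hP2 : (0:ℝ) < (n:ℝ) ^ (θ + α) := Real.rpow_pos_of_pos hN0 _
      have hP3 : (0:ℝ) < ((n:ℝ) + 2) ^ (α - 1) := Real.rpow_pos_of_pos (by positivity) _
      rw [e1, e2, e3, e4]
      simp only [hu]
      field_simp
      linear_combination hpow
    exact (tendsto_add_atTop_iff_nat 1).mp hshift
  -- little-o condition
  have ho : (fun j => u j - C * b j) =o[atTop] b := by
    rw [Asymptotics.isLittleO_iff_tendsto (fun j hj => absurd hj (hbpos j).ne')]
    have h' := hterm.sub_const C
    rw [sub_self] at h'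
    refine h'.congr fun j => ?_
    rw [sub_div, mul_div_assoc, div_self (hbpos j).ne', mul_one]
  -- Stolz
  have hSdivT := stolz (fun i => (hbpos i).le) hTtop ho
  -- squeeze for (∑ b) / n^α → 1/α
  have hL : Tendsto (fun n : ℕ => ((((n:ℝ) + 1) / (n:ℝ)) ^ α - ((n:ℝ)) ^ (-α)) / α)
      atTop (nhds (1 / α)) := by
    have hbase : Tendsto (fun n : ℕ => ((n:ℝ) + 1) / (n:ℝ)) atTop (nhds 1) := by
      have h' : Tendsto (fun n : ℕ => 1 + 1 / (n:ℝ)) atTop (nhds 1) := by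
        have := tendsto_one_div_atTop_nhds_zero_nat (𝕜 := ℝ)
        have h2 := this.const_add 1
        simpa using h2
      refine h'.congr' ?_
      filter_upwards [eventually_ge_atTop 1] with n hn
      have hN0 : (0:ℝ) < (n:ℝ) := by exact_mod_cast hn
      field_simp
    have h1' : Tendsto (fun n : ℕ => (((n:ℝ) + 1) / (n:ℝ)) ^ α) atTop (nhds 1) := by
      have := hbase.rpow_const (p := α) (Or.inl one_ne_zero)
      simpa using this
    have h2' : Tendsto (fun n : ℕ => ((n:ℝ)) ^ (-α)) atTop (nhds 0) :=
      (tendsto_rpow_neg_atTop h0).comp tendsto_natCast_atTop_atTop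
    have := (h1'.sub h2').div_const α
    simpa using this
  have hR' : Tendsto (fun n : ℕ =>
      ((((n:ℝ) + 1) / (n:ℝ)) ^ α - ((n:ℝ)) ^ (-α)) / α + ((n:ℝ)) ^ (-α))
      atTop (nhds (1 / α)) := by
    have h2' : Tendsto (fun n : ℕ => ((n:ℝ)) ^ (-α)) atTop (nhds 0) :=
      (tendsto_rpow_neg_atTop h0).comp tendsto_natCast_atTop_atTop
    have := hL.add h2'
    simpa using this
  have hTdiv : Tendsto (fun n : ℕ => (∑ j ∈ Finset.range n, b j) / (n:ℝ) ^ α)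
      atTop (nhds (1 / α)) := by
    refine tendsto_of_tendsto_of_tendsto_of_le_of_le' hL hR' ?_ ?_
    · filter_upwards [eventually_ge_atTop 1] with n hn
      have hN0 : (0:ℝ) < (n:ℝ) := by exact_mod_cast hn
      have hnα : (0:ℝ) < (n:ℝ) ^ α := Real.rpow_pos_of_pos hN0 _
      have hlow := htel_low n
      have hdivpow : (((n:ℝ) + 1) / (n:ℝ)) ^ α = ((n:ℝ) + 1) ^ α / (n:ℝ) ^ α :=
        Real.div_rpow (by positivity) hN0.le _
      have hneg : ((n:ℝ)) ^ (-α) = 1 / (n:ℝ) ^ α := by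
        rw [Real.rpow_neg hN0.le, one_div]
      have heq : ((((n:ℝ) + 1) / (n:ℝ)) ^ α - ((n:ℝ)) ^ (-α)) / α
          = (((n:ℝ) + 1) ^ α - 1) / (α * (n:ℝ) ^ α) := by
        rw [hdivpow, hneg]
        field_simp
      rw [heq, div_le_div_iff₀ (by positivity) hnα]
      nlinarith [hlow, hnα.le]
    · filter_upwards [eventually_ge_atTop 1] with n hn
      have hN0 : (0:ℝ) < (n:ℝ) := by exact_mod_cast hn
      have hnα : (0:ℝ) < (n:ℝ) ^ α := Real.rpow_pos_of_pos hN0 _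
      have hup := htel_up n
      have hdivpow : (((n:ℝ) + 1) / (n:ℝ)) ^ α = ((n:ℝ) + 1) ^ α / (n:ℝ) ^ α :=
        Real.div_rpow (by positivity) hN0.le _
      have hneg : ((n:ℝ)) ^ (-α) = 1 / (n:ℝ) ^ α := by
        rw [Real.rpow_neg hN0.le, one_div]
      have heq : ((((n:ℝ) + 1) / (n:ℝ)) ^ α - ((n:ℝ)) ^ (-α)) / α + ((n:ℝ)) ^ (-α)
          = (((n:ℝ) + 1) ^ α - 1 + α) / (α * (n:ℝ) ^ α) := by
        rw [hdivpow, hneg]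
        field_simp
      rw [heq, div_le_div_iff₀ hnα (by positivity)]
      nlinarith [hup, hnα.le]
  -- assemble
  have hfinal := hSdivT.mul hTdiv
  have hlim : Real.Gamma (θ + 1) / (α * Real.Gamma (θ + α)) = C * (1 / α) := by
    rw [hC]
    field_simp
  rw [hlim]
  refine hfinal.congr' ?_
  filter_upwards [eventually_ge_atTop 1] with n hn
  have hN0 : (0:ℝ) < (n:ℝ) := by exact_mod_cast hn
  have hnα : (0:ℝ) < (n:ℝ) ^ α := Real.rpow_pos_of_pos hN0 _
  have hTpos : 0 < ∑ j ∈ Finset.range n, b j :=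
    Finset.sum_pos (fun i _ => hbpos i) (Finset.nonempty_range_iff.mpr (by omega))
  have hsum_eq : ∑ i ∈ Finset.Icc 1 n, rf (θ + α) (i - 1) / rf (θ + 1) (i - 1)
      = ∑ j ∈ Finset.range n, u j := by
    rw [← Finset.Ico_add_one_right_eq_Icc, Finset.sum_Ico_eq_sum_range]
    simp [hu]
  rw [hsum_eq, div_mul_div_cancel₀ hTpos.ne']
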